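/- Let 𝔞 be a fractional ideal of a number field K and let P = O_K ⊕ 𝔞. Every rank one projective O_K-submodule of P is contained in 𝔟₀^{-1}·(x,y) for some (x,y) ∈ K² \ {(0,0)}, where 𝔟₀ = O_K·x + 𝔞^{-1}·y; moreover 𝔟₀^{-1}·(x,y) is itself a rank one projective O_K-submodule of P. -/

import Mathlib

open NumberField FractionalIdeal

variable (K : Type) [Field K] [NumberField K]

instance : NoZeroSMulDivisors (𝓞 K) K :=
  ⟨fun {c x} h => by
    rw [Algebra.smul_def, mul_eq_zero, map_eq_zero_iff _ (IsFractionRing.injective _ _)] at h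
    exact h⟩

/-- The `𝓞 K`-linear map `K → K × K`, `c ↦ (c·x, c·y)`. -/
noncomputable def lineMap' (x y : K) : K →ₗ[𝓞 K] K × K :=
  (LinearMap.mulRight (𝓞 K) x).prod (LinearMap.mulRight (𝓞 K) y)

/-- The fractional ideal `𝔟₀ = 𝓞_K·x + 𝔞⁻¹·y`. -/
noncomputable def b0 (𝔞 : FractionalIdeal (nonZeroDivisors (𝓞 K)) K) (x y : K) :
    FractionalIdeal (nonZeroDivisors (𝓞 K)) K :=
  spanSingleton (nonZeroDivisors (𝓞 K)) x + 𝔞⁻¹ * spanSingleton (nonZeroDivisors (𝓞 K)) y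

/-- The submodule `𝔟₀⁻¹·(x,y)` of `K²`. -/
noncomputable def lineSubmodule (𝔞 : FractionalIdeal (nonZeroDivisors (𝓞 K)) K) (x y : K) :
    Submodule (𝓞 K) (K × K) :=
  Submodule.map (lineMap' K x y) ((b0 K 𝔞 x y)⁻¹ : FractionalIdeal (nonZeroDivisors (𝓞 K)) K)

/-- The submodule `P = 𝓞_K ⊕ 𝔞` of `K²`. -/
noncomputable def Pmod (𝔞 : FractionalIdeal (nonZeroDivisors (𝓞 K)) K) :
    Submodule (𝓞 K) (K × K) :=
  Submodule.prod ((1 : FractionalIdeal (nonZeroDivisors (𝓞 K)) K) : Submodule (𝓞 K) K)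
    (𝔞 : Submodule (𝓞 K) K)


section Aux
set_option linter.unusedSectionVars false
variable {K}

/-- Any two elements of `K` satisfy a nontrivial `𝓞 K`-linear relation. -/
lemma exists_dependence (a b : K) :
    ∃ r s : 𝓞 K, ¬(r = 0 ∧ s = 0) ∧ r • a + s • b = 0 := by
  by_cases haz : a = 0
  · exact ⟨1, 0, by simp, by simp [haz]⟩
  · obtain ⟨⟨r, t⟩, h⟩ := IsLocalization.surj (nonZeroDivisors (𝓞 K)) (S := K) (b / a)
    refine ⟨-r, t, fun hc => (nonZeroDivisors.coe_ne_zero t) hc.2, ?_⟩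
    have ht : b * algebraMap (𝓞 K) K t = algebraMap (𝓞 K) K r * a := by
      field_simp at h
      linear_combination h
    simp only [Algebra.smul_def, map_neg]
    linear_combination ht

lemma rank_K_le_one : Module.rank (𝓞 K) K ≤ 1 := by
  apply rank_le (n := 1)
  intro s li
  by_contra hcard
  push_neg at hcard
  obtain ⟨a, ha, b, hb, hab⟩ := Finset.one_lt_card.mp hcard
  set e : Fin 2 → {x // x ∈ s} := ![⟨a, ha⟩, ⟨b, hb⟩] with he
  have hinj : Function.Injective e := by
    intro i j hij
    fin_cases i <;> fin_cases j <;> simp_all [e, Subtype.ext_iff]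
  have li2 : LinearIndependent (𝓞 K) fun i => ((e i : {x // x ∈ s}) : K) :=
    li.comp e hinj
  obtain ⟨r, t, hrt, hrel⟩ := exists_dependence a b
  have := Fintype.linearIndependent_iff.mp li2 ![r, t] ?_
  · exact hrt ⟨this 0, this 1⟩
  · simpa [Fin.sum_univ_two, e] using hrel

lemma rank_coe_eq_one (𝔟 : FractionalIdeal (nonZeroDivisors (𝓞 K)) K) (h : 𝔟 ≠ 0) :
    Module.rank (𝓞 K) ↥(𝔟 : Submodule (𝓞 K) K) = 1 := by
  have hbot : (𝔟 : Submodule (𝓞 K) K) ≠ ⊥ := by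
    simpa [FractionalIdeal.coeToSubmodule_eq_bot] using h
  haveI : Nontrivial ↥(𝔟 : Submodule (𝓞 K) K) :=
    Submodule.nontrivial_iff_ne_bot.mpr hbot
  refine le_antisymm (le_trans (Submodule.rank_le _) rank_K_le_one) ?_
  exact Cardinal.one_le_iff_pos.mpr rank_pos

/-- A nonzero fractional ideal, viewed as an `𝓞 K`-submodule of `K`, is projective. -/
lemma projective_coe (𝔟 : FractionalIdeal (nonZeroDivisors (𝓞 K)) K) (h : 𝔟 ≠ 0) :
    Module.Projective (𝓞 K) ↥(𝔟 : Submodule (𝓞 K) K) := by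
  have hinv : 𝔟⁻¹ * 𝔟 = 1 := by
    rw [mul_comm]; exact mul_inv_cancel₀ h
  have hone : (1 : K) ∈ ((𝔟⁻¹ : FractionalIdeal (nonZeroDivisors (𝓞 K)) K) : Submodule (𝓞 K) K) *
      (𝔟 : Submodule (𝓞 K) K) := by
    rw [← FractionalIdeal.coe_mul, hinv, FractionalIdeal.coe_one]
    exact Submodule.one_le.mp le_rfl
  have hrep : ∃ (n : ℕ) (a b : Fin n → K),
      (∀ i, a i ∈ (𝔟⁻¹ : FractionalIdeal (nonZeroDivisors (𝓞 K)) K)) ∧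
      (∀ i, b i ∈ 𝔟) ∧ ∑ i, a i * b i = 1 := by
    refine Submodule.mul_induction_on hone ?_ ?_
    · intro m hm n hn
      exact ⟨1, fun _ => m, fun _ => n, fun _ => FractionalIdeal.mem_coe.mp hm,
        fun _ => FractionalIdeal.mem_coe.mp hn, by simp⟩
    · rintro z w ⟨n₁, a₁, b₁, ha₁, hb₁, hs₁⟩ ⟨n₂, a₂, b₂, ha₂, hb₂, hs₂⟩
      refine ⟨n₁ + n₂, Fin.append a₁ a₂, Fin.append b₁ b₂, ?_, ?_, ?_⟩
      · intro i
        refine Fin.addCases (fun j => ?_) (fun j => ?_) i <;>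
          simp [Fin.append_left, Fin.append_right, ha₁ _, ha₂ _]
      · intro i
        refine Fin.addCases (fun j => ?_) (fun j => ?_) i <;>
          simp [Fin.append_left, Fin.append_right, hb₁ _, hb₂ _]
      · rw [Fin.sum_univ_add]
        simp [Fin.append_left, Fin.append_right, hs₁, hs₂]
  obtain ⟨n, a, b, ha, hb, hsum⟩ := hrep
  -- membership proofs
  have hmem : ∀ (m : ↥(𝔟 : Submodule (𝓞 K) K)) (i : Fin n),
      ∃ r : 𝓞 K, algebraMap (𝓞 K) K r = a i * (m : K) := by
    intro m i
    exact FractionalIdeal.mem_one_iff _ |>.mp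
      ((FractionalIdeal.mem_inv_iff h).mp (ha i) (m : K) (FractionalIdeal.mem_coe.mp m.2))
  have hAM : Function.Injective (algebraMap (𝓞 K) K) := IsFractionRing.injective _ _
  -- the section
  let g : ↥(𝔟 : Submodule (𝓞 K) K) →ₗ[𝓞 K] (Fin n → 𝓞 K) :=
    { toFun := fun m i => (hmem m i).choose
      map_add' := by
        intro m m'
        funext i
        apply hAM
        show algebraMap (𝓞 K) K ((hmem (m + m') i).choose) =
          algebraMap (𝓞 K) K ((hmem m i).choose + (hmem m' i).choose)
        rw [_root_.map_add, (hmem (m + m') i).choose_spec, (hmem m i).choose_spec,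
          (hmem m' i).choose_spec, Submodule.coe_add, mul_add]
      map_smul' := by
        intro r m
        funext i
        apply hAM
        show algebraMap (𝓞 K) K ((hmem (r • m) i).choose) =
          algebraMap (𝓞 K) K (r • (hmem m i).choose)
        rw [(hmem (r • m) i).choose_spec]
        simp only [RingHom.id_apply, Pi.smul_apply, smul_eq_mul, _root_.map_mul,
          (hmem (r • m) i).choose_spec, (hmem m i).choose_spec, Submodule.coe_smul,
          Algebra.smul_def]
        ring }
  let F : (Fin n → 𝓞 K) →ₗ[𝓞 K] K :=
    ∑ i, (LinearMap.toSpanSingleton (𝓞 K) K (b i)).comp (LinearMap.proj i)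
  have hF : ∀ v, F v = ∑ i, v i • b i := by
    intro v
    simp [F, LinearMap.sum_apply, LinearMap.toSpanSingleton_apply]
  let f : (Fin n → 𝓞 K) →ₗ[𝓞 K] ↥(𝔟 : Submodule (𝓞 K) K) :=
    LinearMap.codRestrict (𝔟 : Submodule (𝓞 K) K) F (fun v => by
      rw [hF]
      exact Submodule.sum_mem _ fun i _ =>
        Submodule.smul_mem _ _ (FractionalIdeal.mem_coe.mpr (hb i)))
  refine Module.Projective.of_split g f ?_
  ext m
  show F (g m) = (m : K)
  rw [hF]
  have hg : ∀ i, algebraMap (𝓞 K) K (g m i) = a i * (m : K) := fun i => (hmem m i).choose_spec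
  calc ∑ i, (g m i) • b i = ∑ i, a i * (m : K) * b i := by
        refine Finset.sum_congr rfl fun i _ => ?_
        rw [Algebra.smul_def, hg i]
    _ = (∑ i, a i * b i) * (m : K) := by
        rw [Finset.sum_mul]; exact Finset.sum_congr rfl fun i _ => by ring
    _ = (m : K) := by rw [hsum]; ring

lemma lineMap'_apply (x y c : K) : lineMap' K x y c = (c * x, c * y) := rfl

lemma b0_ne_zero {𝔞 : FractionalIdeal (nonZeroDivisors (𝓞 K)) K} (ha : 𝔞 ≠ 0)
    {x y : K} (h : (x, y) ≠ (0, 0)) : b0 K 𝔞 x y ≠ 0 := by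
  intro h0
  apply h
  have hainv : 𝔞⁻¹ ≠ 0 := inv_ne_zero ha
  have hx : x = 0 := by
    have hxmem : x ∈ b0 K 𝔞 x y :=
      (FractionalIdeal.mem_add _ _ _).mpr
        ⟨x, FractionalIdeal.mem_spanSingleton_self _ _, 0, zero_mem _, add_zero x⟩
    rw [h0] at hxmem
    simpa using hxmem
  have hy : y = 0 := by
    obtain ⟨a, hamem, hane⟩ := Submodule.ne_bot_iff _ |>.mp
      (by simpa [FractionalIdeal.coeToSubmodule_eq_bot] using hainv :
        ((𝔞⁻¹ : FractionalIdeal (nonZeroDivisors (𝓞 K)) K) : Submodule (𝓞 K) K) ≠ ⊥)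
    have hmem : a * y ∈ b0 K 𝔞 x y :=
      (FractionalIdeal.mem_add _ _ _).mpr
        ⟨0, zero_mem _,
          a * y, FractionalIdeal.mul_mem_mul (FractionalIdeal.mem_coe.mp hamem)
            (FractionalIdeal.mem_spanSingleton_self _ _), zero_add _⟩
    rw [h0] at hmem
    have : a * y = 0 := by simpa using hmem
    rcases mul_eq_zero.mp this with h' | h'
    · exact absurd h' hane
    · exact h'
  simp [hx, hy]

lemma lineMap'_injective {x y : K} (h : (x, y) ≠ (0, 0)) :
    Function.Injective (lineMap' K x y) := by
  have hxy : x ≠ 0 ∨ y ≠ 0 := by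
    by_contra hc
    push_neg at hc
    exact h (by simp [hc.1, hc.2])
  intro c₁ c₂ hc
  have h1 : c₁ * x = c₂ * x := congrArg Prod.fst hc
  have h2 : c₁ * y = c₂ * y := congrArg Prod.snd hc
  rcases hxy with hx | hy
  · exact mul_right_cancel₀ hx h1
  · exact mul_right_cancel₀ hy h2


end Aux

/-- For `P = 𝓞_K ⊕ 𝔞`: (i) for any nonzero `(x,y) ∈ K²`, the submodule `𝔟₀⁻¹·(x,y)`
(with `𝔟₀ = 𝓞_K·x + 𝔞⁻¹·y`) is a rank one projective `𝓞 K`-submodule of `P`, and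
(ii) every rank one projective `𝓞 K`-submodule of `P` is contained in some such
`𝔟₀⁻¹·(x,y)`. -/
theorem rank_one_submodules_of_OK_sum_ideal
    (𝔞 : FractionalIdeal (nonZeroDivisors (𝓞 K)) K) (ha : 𝔞 ≠ 0) :
    (∀ x y : K, (x, y) ≠ (0, 0) →
      lineSubmodule K 𝔞 x y ≤ Pmod K 𝔞 ∧
      Module.Projective (𝓞 K) ↥(lineSubmodule K 𝔞 x y) ∧
      Module.rank (𝓞 K) ↥(lineSubmodule K 𝔞 x y) = 1) ∧
    (∀ Q : Submodule (𝓞 K) (K × K), Q ≤ Pmod K 𝔞 → Module.Projective (𝓞 K) ↥Q →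
      Module.rank (𝓞 K) ↥Q = 1 →
      ∃ x y : K, (x, y) ≠ (0, 0) ∧ Q ≤ lineSubmodule K 𝔞 x y) := by
  constructor
  · -- Part (i)
    intro x y hxy
    have hb0 : b0 K 𝔞 x y ≠ 0 := b0_ne_zero ha hxy
    have hb0inv : (b0 K 𝔞 x y)⁻¹ ≠ 0 := inv_ne_zero hb0
    have hxb0 : x ∈ b0 K 𝔞 x y :=
      (FractionalIdeal.mem_add _ _ _).mpr
        ⟨x, FractionalIdeal.mem_spanSingleton_self _ _, 0, zero_mem _, add_zero x⟩
    refine ⟨?_, ?_, ?_⟩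
    · rintro z ⟨c, hc, rfl⟩
      have hc' : c ∈ (b0 K 𝔞 x y)⁻¹ := FractionalIdeal.mem_coe.mp hc
      rw [lineMap'_apply]
      refine Submodule.mem_prod.mpr ⟨?_, ?_⟩
      · exact FractionalIdeal.mem_coe.mpr ((FractionalIdeal.mem_inv_iff hb0).mp hc' x hxb0)
      · refine FractionalIdeal.mem_coe.mpr ?_
        have hainv : 𝔞⁻¹ ≠ 0 := inv_ne_zero ha
        rw [← inv_inv 𝔞]
        rw [FractionalIdeal.mem_inv_iff hainv]
        intro a' ha'
        have h1 : a' * y ∈ b0 K 𝔞 x y :=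
          (FractionalIdeal.mem_add _ _ _).mpr
            ⟨0, zero_mem _, a' * y,
              FractionalIdeal.mul_mem_mul ha' (FractionalIdeal.mem_spanSingleton_self _ _),
              zero_add _⟩
        have := (FractionalIdeal.mem_inv_iff hb0).mp hc' _ h1
        rwa [show c * y * a' = c * (a' * y) by ring]
    · haveI := projective_coe (b0 K 𝔞 x y)⁻¹ hb0inv
      exact Module.Projective.of_equiv
        (Submodule.equivMapOfInjective (lineMap' K x y) (lineMap'_injective hxy) _)
    · have e := Submodule.equivMapOfInjective (lineMap' K x y) (lineMap'_injective hxy)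
        (((b0 K 𝔞 x y)⁻¹ : FractionalIdeal (nonZeroDivisors (𝓞 K)) K) : Submodule (𝓞 K) K)
      have he : Module.rank (𝓞 K) ↥(lineSubmodule K 𝔞 x y) =
          Module.rank (𝓞 K)
            ↥(((b0 K 𝔞 x y)⁻¹ : FractionalIdeal (nonZeroDivisors (𝓞 K)) K) : Submodule (𝓞 K) K) :=
        (LinearEquiv.rank_eq e).symm
      rw [he]
      exact rank_coe_eq_one _ hb0inv
  · -- Part (ii)
    intro Q hQP _hproj hrank
    have hQbot : Q ≠ ⊥ := by
      intro hbot
      rw [hbot] at hrank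
      rw [rank_subsingleton' (𝓞 K) ↥(⊥ : Submodule (𝓞 K) (K × K))] at hrank
      exact zero_ne_one hrank
    obtain ⟨⟨x, y⟩, hmemQ, hne⟩ := (Submodule.ne_bot_iff Q).mp hQbot
    have hxy : (x, y) ≠ (0, 0) := hne
    refine ⟨x, y, hxy, ?_⟩
    have hb0 : b0 K 𝔞 x y ≠ 0 := b0_ne_zero ha hxy
    rintro ⟨u, v⟩ hz
    -- u and v lie in the respective ideals
    have hP := hQP hz
    have hu : u ∈ (1 : FractionalIdeal (nonZeroDivisors (𝓞 K)) K) :=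
      FractionalIdeal.mem_coe.mp (Submodule.mem_prod.mp hP).1
    have hv : v ∈ 𝔞 := FractionalIdeal.mem_coe.mp (Submodule.mem_prod.mp hP).2
    -- find a nontrivial relation between (u,v) and (x,y)
    have hdep : ∃ r s : 𝓞 K, ¬(r = 0 ∧ s = 0) ∧ r • (u, v) + s • (x, y) = (0 : K × K) := by
      by_contra hcon
      have hli : LinearIndependent (𝓞 K) (![(u, v), (x, y)] : Fin 2 → K × K) := by
        rw [Fintype.linearIndependent_iff]
        intro g hg
        have hrel : g 0 • (u, v) + g 1 • (x, y) = (0 : K × K) := by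
          simpa [Fin.sum_univ_two] using hg
        have h00 : g 0 = 0 ∧ g 1 = 0 := by
          by_contra hg0
          exact hcon ⟨g 0, g 1, hg0, hrel⟩
        intro i
        fin_cases i
        · exact h00.1
        · exact h00.2
      have hliQ : LinearIndependent (𝓞 K)
          (![⟨(u, v), hz⟩, ⟨(x, y), hmemQ⟩] : Fin 2 → ↥Q) := by
        apply LinearIndependent.of_comp Q.subtype
        have hcomp : (Q.subtype ∘ ![⟨(u, v), hz⟩, ⟨(x, y), hmemQ⟩]) = ![(u, v), (x, y)] := by
          funext i
          fin_cases i <;> rfl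
        rw [hcomp]
        exact hli
      have h2 := hliQ.cardinal_lift_le_rank
      rw [hrank] at h2
      simp [Cardinal.mk_fintype] at h2
    obtain ⟨r, s, hrs, hrel⟩ := hdep
    have hrel1 : r • u + s • x = 0 := congrArg Prod.fst hrel
    have hrel2 : r • v + s • y = 0 := congrArg Prod.snd hrel
    have hr : r ≠ 0 := by
      intro hr0
      subst hr0
      have hs : s ≠ 0 := fun hs0 => hrs ⟨rfl, hs0⟩
      apply hxy
      have h1 : s • x = 0 := by simpa using hrel1
      have h2 : s • y = 0 := by simpa using hrel2
      have hx0 : x = 0 := by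
        rcases smul_eq_zero.mp h1 with h' | h'
        exacts [absurd h' hs, h']
      have hy0 : y = 0 := by
        rcases smul_eq_zero.mp h2 with h' | h'
        exacts [absurd h' hs, h']
      simp [hx0, hy0]
    have hrK : algebraMap (𝓞 K) K r ≠ 0 := by
      simpa using (map_ne_zero_iff _ (IsFractionRing.injective (𝓞 K) K)).mpr hr
    set lam : K := -(algebraMap (𝓞 K) K s / algebraMap (𝓞 K) K r) with hlam
    have hu' : lam * x = u := by
      rw [hlam]
      have : algebraMap (𝓞 K) K r * u + algebraMap (𝓞 K) K s * x = 0 := by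
        simpa [Algebra.smul_def] using hrel1
      field_simp
      linear_combination -this
    have hv' : lam * y = v := by
      rw [hlam]
      have : algebraMap (𝓞 K) K r * v + algebraMap (𝓞 K) K s * y = 0 := by
        simpa [Algebra.smul_def] using hrel2
      field_simp
      linear_combination -this
    refine Submodule.mem_map.mpr ⟨lam, ?_, ?_⟩
    · refine FractionalIdeal.mem_coe.mpr ?_
      rw [FractionalIdeal.mem_inv_iff hb0]
      intro b hb
      obtain ⟨b₁, hb₁, b₂, hb₂, rfl⟩ := (FractionalIdeal.mem_add _ _ _).mp hb
      rw [← FractionalIdeal.mem_coe, mul_add]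
      refine Submodule.add_mem _ ?_ ?_
      · obtain ⟨c, hc⟩ := (FractionalIdeal.mem_spanSingleton _).mp hb₁
        rw [← hc, Algebra.smul_def, show lam * (algebraMap (𝓞 K) K c * x) =
          algebraMap (𝓞 K) K c * (lam * x) by ring, hu', ← Algebra.smul_def]
        exact Submodule.smul_mem _ _ (FractionalIdeal.mem_coe.mpr hu)
      · have hb₂' : b₂ ∈ ((𝔞⁻¹ : FractionalIdeal (nonZeroDivisors (𝓞 K)) K) : Submodule (𝓞 K) K) *
            ((spanSingleton (nonZeroDivisors (𝓞 K)) y : FractionalIdeal (nonZeroDivisors (𝓞 K)) K) :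
              Submodule (𝓞 K) K) := by
          rw [← FractionalIdeal.coe_mul]
          exact FractionalIdeal.mem_coe.mpr hb₂
        refine Submodule.mul_induction_on hb₂' ?_ ?_
        · intro p hp q hq
          obtain ⟨c, hc⟩ := (FractionalIdeal.mem_spanSingleton _).mp (FractionalIdeal.mem_coe.mp hq)
          rw [← hc, Algebra.smul_def, show lam * (p * (algebraMap (𝓞 K) K c * y)) =
            algebraMap (𝓞 K) K c * (p * (lam * y)) by ring, hv', ← Algebra.smul_def]
          refine Submodule.smul_mem _ _ ?_
          have : p * v ∈ 𝔞⁻¹ * 𝔞 :=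
            FractionalIdeal.mul_mem_mul (FractionalIdeal.mem_coe.mp hp) hv
          rw [mul_comm, mul_inv_cancel₀ ha] at this
          exact FractionalIdeal.mem_coe.mpr this
        · intro p q hp hq
          rw [mul_add]
          exact Submodule.add_mem _ hp hq
    · rw [lineMap'_apply, hu', hv']
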